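/- Let K be a field of characteristic 0, let d ≥ 2 and m ≥ 1, let 𝒫 be a set of at least m · log₂ d prime numbers, and let H be the set of all p-th roots of unity (in a fixed algebraic closure of K) for all p ∈ 𝒫. Then H is a hitting set for the set of all polynomials f ∈ K[X] of degree at most d with at most m nonzero monomials. -/

import Mathlib

open Polynomial

/-- `H` is a hitting set for a set `F` of polynomials over `K` (with points taken in a
`K`-algebra `L`) if every nonzero polynomial of `F` takes a nonzero value at some point of `H`. -/
def IsHittingSet {K L : Type*} [CommSemiring K] [CommSemiring L] [Algebra K L]
    (H : Set L) (F : Set (Polynomial K)) : Prop :=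
  ∀ f ∈ F, f ≠ 0 → ∃ θ ∈ H, Polynomial.aeval θ f ≠ 0

lemma aux_dvd {K : Type*} [Field K] [CharZero K] (f : K[X]) (p : ℕ) (hp : p.Prime)
    (h : ∀ z : AlgebraicClosure K, z ^ p = 1 → aeval z f = 0) :
    (X ^ p - 1 : K[X]) ∣ f := by
  classical
  rcases eq_or_ne f 0 with rfl | hf0
  · exact dvd_zero _
  set L := AlgebraicClosure K
  have hmonic : (X ^ p - 1 : K[X]).Monic := by
    have := monic_X_pow_sub_C (1 : K) hp.ne_zero
    simpa using this
  rw [← map_dvd_map (algebraMap K L) (algebraMap K L).injective hmonic]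
  have hmap : (X ^ p - 1 : K[X]).map (algebraMap K L) = (X ^ p - 1 : L[X]) := by
    simp [Polynomial.map_sub, Polynomial.map_pow]
  rw [hmap]
  set mf := f.map (algebraMap K L) with hmf
  have hmf0 : mf ≠ 0 := by
    simpa [hmf] using (Polynomial.map_ne_zero_iff (algebraMap K L).injective).2 hf0
  have hsep : (X ^ p - 1 : L[X]).Separable := by
    have : ((p : ℕ) : L) ≠ 0 := by
      exact_mod_cast Nat.cast_ne_zero.mpr hp.ne_zero
    simpa using Polynomial.separable_X_pow_sub_C (1 : L) this one_ne_zero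
  have hnodup : (X ^ p - 1 : L[X]).roots.Nodup := nodup_roots hsep
  have hmonicL : (X ^ p - 1 : L[X]).Monic := by
    have := monic_X_pow_sub_C (1 : L) hp.ne_zero
    simpa using this
  have hprod : (X ^ p - 1 : L[X]) =
      (Multiset.map (fun a => X - C a) (X ^ p - 1 : L[X]).roots).prod :=
    (IsAlgClosed.splits _).eq_prod_roots_of_monic hmonicL
  have hle : (X ^ p - 1 : L[X]).roots ≤ mf.roots := by
    rw [Multiset.le_iff_count]
    intro z
    by_cases hz : z ∈ (X ^ p - 1 : L[X]).roots
    · have h1 : Multiset.count z (X ^ p - 1 : L[X]).roots ≤ 1 :=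
        (Multiset.nodup_iff_count_le_one.1 hnodup) z
      have hzp : z ^ p = 1 := by
        have := Polynomial.isRoot_of_mem_roots hz
        simp only [IsRoot, eval_sub, eval_pow, eval_X, eval_one, sub_eq_zero] at this
        exact this
      have hroot : mf.IsRoot z := by
        have := h z hzp
        rwa [aeval_def, ← eval_map] at this
      have h2 : 0 < Multiset.count z mf.roots :=
        Multiset.count_pos.2 ((Polynomial.mem_roots hmf0).2 hroot)
      omega
    · rw [Multiset.count_eq_zero_of_notMem hz]
      exact Nat.zero_le _
  calc (X ^ p - 1 : L[X])
      = (Multiset.map (fun a => X - C a) (X ^ p - 1 : L[X]).roots).prod := hprod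
    _ ∣ (Multiset.map (fun a => X - C a) mf.roots).prod :=
        Multiset.prod_dvd_prod_of_le (Multiset.map_le_map hle)
    _ ∣ mf := prod_multiset_X_sub_C_dvd mf

lemma aux_fold {K : Type*} [Field K] (f : K[X]) (p : ℕ) (hp : 0 < p)
    (hdvd : (X ^ p - 1 : K[X]) ∣ f) (r : ℕ) (hr : r < p) :
    ∑ j ∈ f.support.filter (fun j => j % p = r), f.coeff j = 0 := by
  set g : K[X] := ∑ j ∈ f.support, C (f.coeff j) * X ^ (j % p) with hg
  have hfg : f - g = ∑ j ∈ f.support,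
      (C (f.coeff j) * X ^ j - C (f.coeff j) * X ^ (j % p)) := by
    rw [Finset.sum_sub_distrib]
    congr 1
    exact f.as_sum_support_C_mul_X_pow
  have hsub : (X ^ p - 1 : K[X]) ∣ f - g := by
    rw [hfg]
    apply Finset.dvd_sum
    intro j hj
    have : C (f.coeff j) * X ^ j - C (f.coeff j) * X ^ (j % p)
        = C (f.coeff j) * X ^ (j % p) * ((X ^ p) ^ (j / p) - 1 ^ (j / p)) := by
      rw [one_pow, ← pow_mul, mul_sub, mul_one, mul_assoc, ← pow_add, Nat.mod_add_div]
    rw [this]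
    exact Dvd.dvd.mul_left (sub_dvd_pow_sub_pow _ _ _) _
  have hgd : (X ^ p - 1 : K[X]) ∣ g := by
    have : g = f - (f - g) := by ring
    rw [this]
    exact dvd_sub hdvd hsub
  have hg0 : g = 0 := by
    by_contra hg0
    have h1 : (X ^ p - 1 : K[X]).natDegree ≤ g.natDegree :=
      natDegree_le_of_dvd hgd hg0
    have h2 : (X ^ p - 1 : K[X]).natDegree = p := by
      have := natDegree_X_pow_sub_C (n := p) (r := (1 : K))
      simpa using this
    have h3 : g.natDegree ≤ p - 1 := by
      apply Polynomial.natDegree_sum_le_of_forall_le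
      intro j hj
      calc (C (f.coeff j) * X ^ (j % p)).natDegree ≤ j % p :=
            natDegree_C_mul_le _ _ |>.trans (by simp)
        _ ≤ p - 1 := Nat.le_pred_of_lt (Nat.mod_lt _ hp)
    omega
  have := congrArg (fun q : K[X] => q.coeff r) hg0
  simp only [hg, finset_sum_coeff, coeff_C_mul, coeff_X_pow, coeff_zero] at this
  calc ∑ j ∈ f.support.filter (fun j => j % p = r), f.coeff j
      = ∑ x ∈ f.support, if x % p = r then f.coeff x else 0 := Finset.sum_filter _ _
    _ = ∑ x ∈ f.support, f.coeff x * if r = x % p then 1 else 0 := by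
        apply Finset.sum_congr rfl
        intro x _
        by_cases h : x % p = r
        · simp [h]
        · simp [h, Ne.symm h]
    _ = 0 := this

/-- Let `K` be a field of characteristic 0, `d ≥ 2`, `m ≥ 1`, and `Ps` a set of at least
`m · log₂ d` prime numbers. Then the set of all `p`-th roots of unity (in an algebraic closure
of `K`), for all `p ∈ Ps`, is a hitting set for the set of all polynomials `f ∈ K[X]` of degree
at most `d` with at most `m` nonzero monomials. -/
theorem stmt4 (K : Type*) [Field K] [CharZero K] (d m : ℕ) (hd : 2 ≤ d) (hm : 1 ≤ m)
    (Ps : Finset ℕ) (hP : ∀ p ∈ Ps, p.Prime)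
    (hcard : m * Real.logb 2 d ≤ Ps.card) :
    IsHittingSet {θ : AlgebraicClosure K | ∃ p ∈ Ps, θ ^ p = 1}
      {f : K[X] | f.natDegree ≤ d ∧ f.support.card ≤ m} := by
  rintro f ⟨hfd, hfm⟩ hf0
  by_contra hcon
  push_neg at hcon
  simp only [Set.mem_setOf_eq] at hcon
  set e := f.natDegree with he
  have heS : e ∈ f.support := Polynomial.natDegree_mem_support_of_nonzero hf0
  have key : ∀ p ∈ Ps, ∃ j ∈ f.support.erase e, p ∣ e - j := by
    intro p hpP
    have hp := hP p hpP
    have hdvd : (X ^ p - 1 : K[X]) ∣ f :=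
      aux_dvd f p hp (fun z hz => hcon z ⟨p, hpP, hz⟩)
    have h0 := aux_fold f p hp.pos hdvd (e % p) (Nat.mod_lt _ hp.pos)
    by_contra hno
    push_neg at hno
    have hfilter : f.support.filter (fun j => j % p = e % p) = {e} := by
      apply Finset.eq_singleton_iff_unique_mem.2
      constructor
      · simp [heS]
      · intro j hj
        simp only [Finset.mem_filter] at hj
        by_contra hne
        have hjle : j ≤ e := Polynomial.le_natDegree_of_mem_supp j hj.1
        have : p ∣ e - j := (Nat.modEq_iff_dvd' hjle).1 hj.2
        exact hno j (Finset.mem_erase.2 ⟨hne, hj.1⟩) this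
    rw [hfilter, Finset.sum_singleton] at h0
    exact (Polynomial.mem_support_iff.1 heS) h0
  choose jf hjf hjfd using key
  set S := f.support.erase e with hS
  set D := ∏ i ∈ S, (e - i) with hD
  have hposf : ∀ i ∈ S, 0 < e - i := by
    intro i hi
    have h1 := Finset.mem_erase.1 hi
    have h2 : i ≤ e := Polynomial.le_natDegree_of_mem_supp i h1.2
    have h3 : i ≠ e := h1.1
    omega
  have hD0 : 0 < D := Finset.prod_pos hposf
  have hDdvd : ∏ p ∈ Ps, p ∣ D := by
    apply Finset.prod_primes_dvd
    · intro p hpP; exact (hP p hpP).prime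
    · intro p hpP
      exact dvd_trans (hjfd p hpP) (Finset.dvd_prod_of_mem _ (hjf p hpP))
  have hDle : D ≤ d ^ (m - 1) := by
    have h1 : D ≤ d ^ S.card := by
      apply Finset.prod_le_pow_card
      intro i hi
      have h2 : i ≤ e := Polynomial.le_natDegree_of_mem_supp i (Finset.mem_erase.1 hi).2
      omega
    have h2 : S.card ≤ m - 1 := by
      rw [hS, Finset.card_erase_of_mem heS]
      omega
    exact h1.trans (Nat.pow_le_pow_right (by omega) h2)
  have h2card : 2 ^ Ps.card ≤ ∏ p ∈ Ps, p := by
    rw [← Finset.prod_const]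
    exact Finset.prod_le_prod' fun p hpP => (hP p hpP).two_le
  have hreal : (d : ℝ) ^ m ≤ 2 ^ Ps.card := by
    have hlogb : Real.logb 2 ((d : ℝ) ^ m) ≤ (Ps.card : ℝ) := by
      rw [Real.logb_pow]
      exact_mod_cast hcard
    have hdpos : (0 : ℝ) < (d : ℝ) ^ m := by positivity
    have := (Real.logb_le_iff_le_rpow (by norm_num) hdpos).1 hlogb
    rwa [Real.rpow_natCast] at this
  have hnat : d ^ m ≤ 2 ^ Ps.card := by exact_mod_cast hreal
  have hchain : D ≤ d ^ (m - 1) := hDle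
  have hchain2 : 2 ^ Ps.card ≤ D :=
    le_trans h2card (Nat.le_of_dvd hD0 hDdvd)
  have hlt : d ^ (m - 1) < d ^ m :=
    Nat.pow_lt_pow_right (by omega) (by omega)
  omega
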